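/- Let weights w_i ≥ 1 be assigned to vertices and Ã = WAW with W = diag(w). Let V* be a maximal independent set such that for every i ∉ V* there exists a neighbor j ∈ V* with w_i ≥ w_j. Then x* with x*_i = w̃²/w_i² for i ∈ V* (where 1/w̃² = Σ_{i∈V*} 1/w_i²) and x*_i = 0 otherwise is a Nash equilibrium of the weighted social distancing game, with equilibrium value λ* = w̃². -/

import Mathlib

open Matrix Finset

/-- Theorem 4.3: with multiplicative weights Ã = WAW, the strategy with
x*_i = w̃²/w_i² on a maximal independent set V* (where 1/w̃² = Σ_{i∈V*} 1/w_i²),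
provided every outside node has a neighbor in V* of no larger weight, is a
Nash equilibrium with value λ* = w̃². -/
theorem stmt_14 (n : ℕ) (A : Matrix (Fin n) (Fin n) ℝ)
    (hsym : A.IsSymm)
    (h01 : ∀ i j, A i j = 0 ∨ A i j = 1)
    (hdiag : ∀ i, A i i = 1)
    (w : Fin n → ℝ) (hw : ∀ i, 1 ≤ w i)
    (At : Matrix (Fin n) (Fin n) ℝ)
    (hAt : At =
      Matrix.diagonal w * A * Matrix.diagonal w)
    (Vs : Finset (Fin n)) (hne : Vs.Nonempty)
    (hindep : ∀ i ∈ Vs, ∀ j ∈ Vs, i ≠ j → A i j = 0)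
    (hmax : ∀ i, i ∉ Vs → ∃ j ∈ Vs, A i j = 1 ∧ w j ≤ w i)
    (wbar : ℝ) (hwbar : wbar = (∑ i ∈ Vs, ((w i) ^ 2)⁻¹)⁻¹)
    (xstar : Fin n → ℝ)
    (hxstar : xstar = fun i => if i ∈ Vs then wbar / (w i) ^ 2 else 0) :
    xstar ∈ stdSimplex ℝ (Fin n) ∧
    (∀ x ∈ stdSimplex ℝ (Fin n),
        xstar ⬝ᵥ At.mulVec xstar ≤ x ⬝ᵥ At.mulVec xstar) ∧
    xstar ⬝ᵥ At.mulVec xstar = wbar := by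
  subst hAt hxstar
  have hw0 : ∀ i, (0:ℝ) < w i := fun i => lt_of_lt_of_le one_pos (hw i)
  have hSpos : 0 < ∑ i ∈ Vs, ((w i)^2)⁻¹ :=
    Finset.sum_pos (fun i _ => inv_pos.2 (pow_pos (hw0 i) 2)) hne
  have hwbpos : 0 < wbar := by rw [hwbar]; exact inv_pos.2 hSpos
  have hsum1 : ∑ i, (if i ∈ Vs then wbar / (w i)^2 else 0) = 1 := by
    rw [Finset.sum_ite_mem, Finset.univ_inter]
    simp only [div_eq_mul_inv, ← Finset.mul_sum, hwbar]
    exact inv_mul_cancel₀ hSpos.ne'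
  have hAtij : ∀ i j, (Matrix.diagonal w * A * Matrix.diagonal w) i j = w i * A i j * w j := by
    intro i j
    rw [Matrix.mul_diagonal, Matrix.diagonal_mul]
  have hmv : ∀ i, ((Matrix.diagonal w * A * Matrix.diagonal w).mulVec
      (fun i => if i ∈ Vs then wbar / (w i)^2 else 0)) i
      = ∑ j ∈ Vs, w i * A i j * (wbar / w j) := by
    intro i
    rw [Matrix.mulVec]
    simp only [dotProduct, hAtij, mul_ite, mul_zero]
    rw [Finset.sum_ite_mem, Finset.univ_inter]
    apply Finset.sum_congr rfl
    intro j hj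
    have : w j ≠ 0 := (hw0 j).ne'
    field_simp
  have heq : ∀ i ∈ Vs, (∑ j ∈ Vs, w i * A i j * (wbar / w j)) = wbar := by
    intro i hi
    rw [Finset.sum_eq_single_of_mem i hi]
    · rw [hdiag i, mul_one, mul_comm, div_mul_cancel₀ _ (hw0 i).ne']
    · intro j hj hji
      rw [hindep i hi j hj (Ne.symm hji)]
      ring
  have hge : ∀ i, wbar ≤ ∑ j ∈ Vs, w i * A i j * (wbar / w j) := by
    intro i
    by_cases hi : i ∈ Vs
    · rw [heq i hi]
    · obtain ⟨j, hj, hAij, hwj⟩ := hmax i hi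
      have hterm : wbar ≤ w i * A i j * (wbar / w j) := by
        rw [hAij, mul_one]
        have h1 : w j * (wbar / w j) = wbar := by
          rw [mul_comm, div_mul_cancel₀ _ (hw0 j).ne']
        calc wbar = w j * (wbar / w j) := h1.symm
          _ ≤ w i * (wbar / w j) := mul_le_mul_of_nonneg_right hwj (div_nonneg hwbpos.le (hw0 j).le)
      refine le_trans hterm (Finset.single_le_sum (f := fun k => w i * A i k * (wbar / w k)) (fun k hk => ?_) hj)
      rcases h01 i k with h | h <;> rw [h]
      · simp
      · rw [mul_one]
        exact mul_nonneg (hw0 i).le (div_nonneg hwbpos.le (hw0 k).le)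
  have hxs : (fun i => if i ∈ Vs then wbar / (w i)^2 else 0) ∈ stdSimplex ℝ (Fin n) := by
    constructor
    · intro i; dsimp only; split
      · positivity
      · exact le_refl 0
    · exact hsum1
  refine ⟨hxs, ?_, ?_⟩
  · intro x hx
    simp only [dotProduct, hmv]
    calc ∑ i, (if i ∈ Vs then wbar / (w i)^2 else 0) * (∑ j ∈ Vs, w i * A i j * (wbar / w j))
        = ∑ i, (if i ∈ Vs then wbar / (w i)^2 else 0) * wbar := by
          apply Finset.sum_congr rfl
          intro i _
          by_cases hi : i ∈ Vs
          · rw [heq i hi]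
          · simp [hi]
      _ = wbar := by rw [← Finset.sum_mul, hsum1, one_mul]
      _ = (∑ i, x i) * wbar := by rw [hx.2, one_mul]
      _ = ∑ i, x i * wbar := by rw [Finset.sum_mul]
      _ ≤ ∑ i, x i * (∑ j ∈ Vs, w i * A i j * (wbar / w j)) := by
          apply Finset.sum_le_sum
          intro i _
          exact mul_le_mul_of_nonneg_left (hge i) (hx.1 i)
  · simp only [dotProduct, hmv]
    calc ∑ i, (if i ∈ Vs then wbar / (w i)^2 else 0) * (∑ j ∈ Vs, w i * A i j * (wbar / w j))
        = ∑ i, (if i ∈ Vs then wbar / (w i)^2 else 0) * wbar := by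
          apply Finset.sum_congr rfl
          intro i _
          by_cases hi : i ∈ Vs
          · rw [heq i hi]
          · simp [hi]
      _ = wbar := by rw [← Finset.sum_mul, hsum1, one_mul]
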